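/- Let X and Y be normed spaces over ℂ, let u ∈ X with ‖u‖ = 1, and let E = X ⊕¹ Y be the product X × Y equipped with the norm ‖(x,y)‖ = ‖x‖ + ‖y‖. Then for every (x,y) ∈ E one has γ^{(u,0)}((x,y)) = γ^u(x) + ‖y‖, where γ^{(u,0)} is computed in E and γ^u is computed in X. -/

import Mathlib

/-- `S(X;u)`: the set of norm-one continuous linear functionals attaining value `1` at `u`. -/
def geomStates {X : Type*} [NormedAddCommGroup X] [NormedSpace ℂ X] (u : X) :
    Set (X →L[ℂ] ℂ) :=
  {f | ‖f‖ = 1 ∧ f u = 1}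

/-- `γ^u(x) = sup {|f(x)| : f ∈ S(X;u)}`. -/
noncomputable def geomGamma {X : Type*} [NormedAddCommGroup X] [NormedSpace ℂ X]
    (u x : X) : ℝ :=
  sSup {r : ℝ | ∃ f ∈ geomStates u, r = ‖f x‖}

/-- `n(X;u) = inf {γ^u(x) : ‖x‖ = 1}`. -/
noncomputable def geomN {X : Type*} [NormedAddCommGroup X] [NormedSpace ℂ X] (u : X) : ℝ :=
  sInf {r : ℝ | ∃ x : X, ‖x‖ = 1 ∧ r = geomGamma u x}

section Aux
variable {X Y : Type*} [NormedAddCommGroup X] [NormedSpace ℂ X]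
  [NormedAddCommGroup Y] [NormedSpace ℂ Y]

omit [NormedSpace ℂ X] [NormedSpace ℂ Y] in
private lemma l1norm (a : X) (b : Y) :
    ‖(WithLp.equiv 1 (X × Y)).symm (a, b)‖ = ‖a‖ + ‖b‖ := by
  rw [WithLp.prod_norm_eq_add (by norm_num)]
  norm_num

/-- Combine functionals on the factors into one on the ℓ¹-product. -/
noncomputable def pairFun (f : X →L[ℂ] ℂ) (g : Y →L[ℂ] ℂ) : WithLp 1 (X × Y) →L[ℂ] ℂ :=
  (f.comp (ContinuousLinearMap.fst ℂ X Y) + g.comp (ContinuousLinearMap.snd ℂ X Y)).comp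
    (WithLp.prodContinuousLinearEquiv 1 ℂ X Y).toContinuousLinearMap

lemma pairFun_apply (f : X →L[ℂ] ℂ) (g : Y →L[ℂ] ℂ) (a : X) (b : Y) :
    pairFun f g ((WithLp.equiv 1 (X × Y)).symm (a, b)) = f a + g b := rfl

lemma pairFun_mem (f : X →L[ℂ] ℂ) (g : Y →L[ℂ] ℂ) (u : X) (hu : ‖u‖ = 1)
    (hf : f ∈ geomStates u) (hg : ‖g‖ ≤ 1) :
    pairFun f g ∈ geomStates ((WithLp.equiv 1 (X × Y)).symm (u, 0)) := by
  obtain ⟨hf1, hf2⟩ := hf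
  have happ : pairFun f g ((WithLp.equiv 1 (X × Y)).symm (u, 0)) = 1 := by
    rw [pairFun_apply, hf2, map_zero, add_zero]
  refine ⟨le_antisymm ?_ ?_, happ⟩
  · apply ContinuousLinearMap.opNorm_le_bound _ zero_le_one
    intro z
    have hz : z = (WithLp.equiv 1 (X × Y)).symm (z.fst, z.snd) := rfl
    rw [hz, pairFun_apply, l1norm, one_mul]
    calc ‖f z.fst + g z.snd‖ ≤ ‖f z.fst‖ + ‖g z.snd‖ := norm_add_le _ _
      _ ≤ ‖z.fst‖ + ‖z.snd‖ := by
          refine add_le_add ?_ ?_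
          · calc ‖f z.fst‖ ≤ ‖f‖ * ‖z.fst‖ := f.le_opNorm _
              _ = ‖z.fst‖ := by rw [hf1, one_mul]
          · calc ‖g z.snd‖ ≤ ‖g‖ * ‖z.snd‖ := g.le_opNorm _
              _ ≤ 1 * ‖z.snd‖ := mul_le_mul_of_nonneg_right hg (norm_nonneg _)
              _ = ‖z.snd‖ := one_mul _
  · have h1 : ‖(WithLp.equiv 1 (X × Y)).symm (u, (0:Y))‖ = 1 := by
      rw [l1norm, norm_zero, add_zero, hu]
    have := (pairFun f g).le_opNorm ((WithLp.equiv 1 (X × Y)).symm (u, 0))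
    rw [happ, h1, mul_one] at this
    simpa using this

end Aux

theorem geomGamma_prod_l1
    {X Y : Type*} [NormedAddCommGroup X] [NormedSpace ℂ X]
    [NormedAddCommGroup Y] [NormedSpace ℂ Y]
    (u : X) (hu : ‖u‖ = 1) (x : X) (y : Y) :
    geomGamma ((WithLp.equiv 1 (X × Y)).symm (u, 0))
        ((WithLp.equiv 1 (X × Y)).symm (x, y)) =
      geomGamma u x + ‖y‖ := by
  classical
  set A : Set ℝ := {r : ℝ | ∃ F ∈ geomStates ((WithLp.equiv 1 (X × Y)).symm (u, (0:Y))),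
      r = ‖F ((WithLp.equiv 1 (X × Y)).symm (x, y))‖} with hA
  set B : Set ℝ := {r : ℝ | ∃ f ∈ geomStates u, r = ‖f x‖} with hB
  -- B → A : each value of B, shifted by ‖y‖, is attained in A
  have hBA : ∀ r ∈ B, r + ‖y‖ ∈ A := by
    rintro r ⟨f, hf, rfl⟩
    set c : ℂ := if f x = 0 then 1 else f x / ‖f x‖ with hc
    have hcn : ‖c‖ = 1 := by
      rcases eq_or_ne (f x) 0 with h | h
      · simp [hc, h]
      · rw [hc, if_neg h, norm_div, Complex.norm_real, Real.norm_of_nonneg (norm_nonneg _),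
          div_self (norm_ne_zero_iff.mpr h)]
    have hfc : f x = c * ‖f x‖ := by
      rcases eq_or_ne (f x) 0 with h | h
      · simp [hc, h]
      · rw [hc, if_neg h, div_mul_cancel₀ _ (Complex.ofReal_ne_zero.mpr
          (norm_ne_zero_iff.mpr h))]
    obtain ⟨g, hg1, hgy⟩ : ∃ g : Y →L[ℂ] ℂ, ‖g‖ ≤ 1 ∧ g y = (‖y‖ : ℂ) := by
      by_cases hy : y = 0
      · exact ⟨0, by simp, by simp [hy]⟩
      · obtain ⟨g, hg, hgy⟩ := exists_dual_vector ℂ y (norm_ne_zero_iff.mpr hy)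
        exact ⟨g, le_of_eq hg, hgy⟩
    have hgle : ‖c • g‖ ≤ 1 := by
      rw [norm_smul c g, hcn, one_mul]; exact hg1
    refine ⟨pairFun f (c • g), pairFun_mem f (c • g) u hu hf hgle, ?_⟩
    rw [pairFun_apply]
    have heq : f x + (c • g) y = c * ((‖f x‖ : ℂ) + (‖y‖ : ℂ)) := by
      rw [mul_add, ← hfc, ContinuousLinearMap.smul_apply, hgy, smul_eq_mul]
    rw [heq, norm_mul, hcn, one_mul, ← Complex.ofReal_add, Complex.norm_real,
      Real.norm_of_nonneg (by positivity)]
  -- A → B : each value of A is dominated by some value of B plus ‖y‖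
  have hAB : ∀ r ∈ A, ∃ s ∈ B, r ≤ s + ‖y‖ := by
    rintro r ⟨F, ⟨hF1, hF2⟩, rfl⟩
    set f : X →L[ℂ] ℂ := F.comp
      ((WithLp.prodContinuousLinearEquiv 1 ℂ X Y).symm.toContinuousLinearMap.comp
        (ContinuousLinearMap.inl ℂ X Y)) with hfdef
    set g : Y →L[ℂ] ℂ := F.comp
      ((WithLp.prodContinuousLinearEquiv 1 ℂ X Y).symm.toContinuousLinearMap.comp
        (ContinuousLinearMap.inr ℂ X Y)) with hgdef
    have hfapp : ∀ a : X, f a = F ((WithLp.equiv 1 (X × Y)).symm (a, 0)) := fun a => rfl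
    have hgapp : ∀ b : Y, g b = F ((WithLp.equiv 1 (X × Y)).symm (0, b)) := fun b => rfl
    have hsplit : (WithLp.equiv 1 (X × Y)).symm (x, y)
        = (WithLp.equiv 1 (X × Y)).symm (x, 0) + (WithLp.equiv 1 (X × Y)).symm (0, y) := by
      apply (WithLp.equiv 1 (X × Y)).injective; simp
    have hFsplit : F ((WithLp.equiv 1 (X × Y)).symm (x, y)) = f x + g y := by
      rw [hfapp, hgapp, ← map_add, ← hsplit]
    have hfle : ‖f‖ ≤ 1 := by
      apply ContinuousLinearMap.opNorm_le_bound _ zero_le_one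
      intro a
      calc ‖f a‖ = ‖F ((WithLp.equiv 1 (X × Y)).symm (a, 0))‖ := by rw [hfapp]
        _ ≤ ‖F‖ * ‖(WithLp.equiv 1 (X × Y)).symm (a, (0:Y))‖ := F.le_opNorm _
        _ = 1 * ‖a‖ := by rw [hF1, l1norm, norm_zero, add_zero]
    have hgle : ‖g‖ ≤ 1 := by
      apply ContinuousLinearMap.opNorm_le_bound _ zero_le_one
      intro b
      calc ‖g b‖ = ‖F ((WithLp.equiv 1 (X × Y)).symm (0, b))‖ := by rw [hgapp]
        _ ≤ ‖F‖ * ‖(WithLp.equiv 1 (X × Y)).symm ((0:X), b)‖ := F.le_opNorm _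
        _ = 1 * ‖b‖ := by rw [hF1, l1norm, norm_zero, zero_add]
    have hfu : f u = 1 := by rw [hfapp]; exact hF2
    have hfnorm : ‖f‖ = 1 := by
      refine le_antisymm hfle ?_
      have := f.le_opNorm u
      rw [hfu, hu, mul_one] at this
      simpa using this
    refine ⟨‖f x‖, ⟨f, ⟨hfnorm, hfu⟩, rfl⟩, ?_⟩
    calc ‖F ((WithLp.equiv 1 (X × Y)).symm (x, y))‖ = ‖f x + g y‖ := by rw [hFsplit]
      _ ≤ ‖f x‖ + ‖g y‖ := norm_add_le _ _
      _ ≤ ‖f x‖ + ‖y‖ := by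
          refine add_le_add le_rfl ?_
          calc ‖g y‖ ≤ ‖g‖ * ‖y‖ := g.le_opNorm _
            _ ≤ 1 * ‖y‖ := mul_le_mul_of_nonneg_right hgle (norm_nonneg _)
            _ = ‖y‖ := one_mul _
  -- basic facts about B and A
  obtain ⟨f₀, hf₀n, hf₀u⟩ := exists_dual_vector ℂ u (by intro h; rw [h] at hu; norm_num at hu)
  have hf₀mem : f₀ ∈ geomStates u := ⟨hf₀n, by rw [hf₀u, hu]; norm_num⟩
  have hBne : (‖f₀ x‖ : ℝ) ∈ B := ⟨f₀, hf₀mem, rfl⟩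
  have hBbdd : BddAbove B := by
    refine ⟨‖x‖, ?_⟩
    rintro r ⟨f, ⟨hf1, _⟩, rfl⟩
    calc ‖f x‖ ≤ ‖f‖ * ‖x‖ := f.le_opNorm _
      _ = ‖x‖ := by rw [hf1, one_mul]
  have hAbdd : BddAbove A := by
    refine ⟨‖x‖ + ‖y‖, ?_⟩
    rintro r ⟨F, ⟨hF1, _⟩, rfl⟩
    calc ‖F ((WithLp.equiv 1 (X × Y)).symm (x, y))‖
        ≤ ‖F‖ * ‖(WithLp.equiv 1 (X × Y)).symm (x, y)‖ := F.le_opNorm _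
      _ = ‖x‖ + ‖y‖ := by rw [hF1, one_mul, l1norm]
  have hBsup_nonneg : 0 ≤ sSup B := le_trans (norm_nonneg _) (le_csSup hBbdd hBne)
  have hAgey : ‖y‖ ≤ sSup A := by
    have h1 : ‖f₀ x‖ + ‖y‖ ∈ A := hBA _ hBne
    have := le_csSup hAbdd h1
    have h2 : (0:ℝ) ≤ ‖f₀ x‖ := norm_nonneg _
    linarith
  show sSup A = sSup B + ‖y‖
  apply le_antisymm
  · apply Real.sSup_le _ (by positivity)
    intro r hr
    obtain ⟨s, hs, hrs⟩ := hAB r hr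
    exact hrs.trans (by gcongr; exact le_csSup hBbdd hs)
  · have : sSup B ≤ sSup A - ‖y‖ := by
      apply Real.sSup_le _ (by linarith)
      intro r hr
      have := le_csSup hAbdd (hBA r hr)
      linarith
    linarith
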